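/- Let A be a unital C*-algebra and F a strictly norming family of representations of A (for each a ∈ A there is π ∈ F with ‖π(a)‖ = ‖a‖). If a ∈ A is non-invertible, then there exists π ∈ F such that π(a) is non-invertible. -/

import Mathlib

noncomputable instance cstarCLM {H : Type*} [NormedAddCommGroup H]
    [InnerProductSpace ℂ H] [CompleteSpace H] : CStarAlgebra (H →L[ℂ] H) :=
  { (inferInstance : NormedRing (H →L[ℂ] H)),
    (inferInstance : StarRing (H →L[ℂ] H)),
    (inferInstance : CStarRing (H →L[ℂ] H)),
    (inferInstance : NormedAlgebra ℂ (H →L[ℂ] H)),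
    (inferInstance : StarModule ℂ (H →L[ℂ] H)),
    (inferInstance : CompleteSpace (H →L[ℂ] H)) with }

/-- Auxiliary: transfer of non-invertibility for nonnegative elements. -/
lemma stmt8_aux {A : Type*} [CStarAlgebra A] [Nontrivial A]
    {ι : Type*} {H : ι → Type*}
    [∀ i, NormedAddCommGroup (H i)] [∀ i, InnerProductSpace ℂ (H i)] [∀ i, CompleteSpace (H i)]
    (π : ∀ i, A →⋆ₐ[ℂ] (H i →L[ℂ] H i))
    (hsn : ∀ a : A, ∃ i, ‖(π i) a‖ = ‖a‖)
    (c : A) (hc0 : ∃ d, c = star d * d) (hcu : ¬ IsUnit c) :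
    ∃ i, ¬ IsUnit ((π i) c) := by
  letI : PartialOrder A := CStarAlgebra.spectralOrder A
  haveI : StarOrderedRing A := CStarAlgebra.spectralOrderedRing A
  obtain ⟨d, rfl⟩ := hc0
  set c : A := star d * d with hc_def
  have hc : 0 ≤ c := star_mul_self_nonneg d
  clear_value c
  by_cases hzero : c = 0
  · obtain ⟨i, hi⟩ := hsn 1
    rw [map_one] at hi
    refine ⟨i, ?_⟩
    rw [hzero, map_zero, isUnit_zero_iff]
    intro h01
    have h1 : ‖(1 : A)‖ ≠ 0 := norm_ne_zero_iff.mpr one_ne_zero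
    apply h1
    rw [← hi, ← h01, norm_zero]
  · -- `b = ‖c‖ - c` is nonnegative with `‖b‖ = ‖c‖`.
    set b : A := algebraMap ℝ A ‖c‖ - c with hb_def
    have hcle : c ≤ algebraMap ℝ A ‖c‖ :=
      (CStarAlgebra.norm_le_iff_le_algebraMap c (norm_nonneg c) hc).mp le_rfl
    have hbnn : 0 ≤ b := sub_nonneg.mpr hcle
    -- 0 ∈ spectrum ℝ c
    have h0c : (0 : ℝ) ∈ spectrum ℝ c := spectrum.zero_mem (R := ℝ) hcu
    have hcb : ‖c‖ ∈ spectrum ℝ b := by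
      rw [hb_def, ← spectrum.singleton_sub_eq]
      exact ⟨‖c‖, rfl, 0, h0c, by simp⟩
    have hbge : ‖c‖ ≤ ‖b‖ := by
      simpa using spectrum.norm_le_norm_of_mem hcb
    have hble : ‖b‖ ≤ ‖c‖ := by
      refine (CStarAlgebra.norm_le_iff_le_algebraMap (A := A) b (r := ‖c‖) (norm_nonneg c) hbnn).mpr ?_
      rw [hb_def]
      exact sub_le_self _ hc
    have hbnorm : ‖b‖ = ‖c‖ := le_antisymm hble hbge
    obtain ⟨i, hi⟩ := hsn b
    rw [hbnorm] at hi
    refine ⟨i, ?_⟩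
    -- π i b is nonnegative
    have hsqrt : CFC.sqrt b * CFC.sqrt b = b := CFC.sqrt_mul_sqrt_self b hbnn
    have hsa : IsSelfAdjoint (CFC.sqrt b) := IsSelfAdjoint.of_nonneg (CFC.sqrt_nonneg b)
    have hπbnn : 0 ≤ (π i) b := by
      rw [← hsqrt, map_mul]
      calc (0 : H i →L[ℂ] H i) ≤ star ((π i) (CFC.sqrt b)) * (π i) (CFC.sqrt b) :=
            star_mul_self_nonneg _
        _ = (π i) (CFC.sqrt b) * (π i) (CFC.sqrt b) := by
            rw [← map_star, hsa.star_eq]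
    -- The algebra is nontrivial since ‖π i b‖ = ‖c‖ ≠ 0
    have hπbne : (π i) b ≠ 0 := by
      intro h
      rw [h, norm_zero] at hi
      exact hzero (norm_eq_zero.mp hi.symm)
    have : Nontrivial (H i →L[ℂ] H i) := ⟨⟨(π i) b, 0, hπbne⟩⟩
    -- ‖c‖ ∈ spectrum ℝ (π i b)
    have hmem : ‖c‖ ∈ spectrum ℝ ((π i) b) := by
      rw [← hi]
      exact CStarAlgebra.norm_mem_spectrum_of_nonneg hπbnn
    -- π i b = algebraMap ℝ _ ‖c‖ - π i c
    have hπb : (π i) b = algebraMap ℝ (H i →L[ℂ] H i) ‖c‖ - (π i) c := by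
      rw [hb_def, map_sub]
      congr 1
      rw [IsScalarTower.algebraMap_apply ℝ ℂ A, AlgHomClass.commutes,
        ← IsScalarTower.algebraMap_apply ℝ ℂ (H i →L[ℂ] H i)]
    rw [spectrum.mem_iff, hπb, sub_sub_cancel] at hmem
    exact hmem

/-- If a family of representations of a unital C*-algebra is strictly
norming and `a` is non-invertible, then some member of the family sends `a` to a
non-invertible operator. -/
theorem stmt8 {A : Type*} [CStarAlgebra A] [Nontrivial A]
    {ι : Type*} (H : ι → Type*)
    [∀ i, NormedAddCommGroup (H i)] [∀ i, InnerProductSpace ℂ (H i)] [∀ i, CompleteSpace (H i)]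
    (π : ∀ i, A →⋆ₐ[ℂ] (H i →L[ℂ] H i))
    (hsn : ∀ a : A, ∃ i, ‖(π i) a‖ = ‖a‖)
    (a : A) (ha : ¬ IsUnit a) :
    ∃ i, ¬ IsUnit ((π i) a) := by
  -- Either `star a * a` or `a * star a` is non-invertible.
  have key : ¬ IsUnit (star a * a) ∨ ¬ IsUnit (a * star a) := by
    by_contra h
    push_neg at h
    obtain ⟨h1, h2⟩ := h
    obtain ⟨u, hu⟩ := isUnit_iff_exists.mp h1
    obtain ⟨v, hv⟩ := isUnit_iff_exists.mp h2
    have hx : (u * star a) * a = 1 := by rw [mul_assoc, hu.2]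
    have hy : a * (star a * v) = 1 := by rw [← mul_assoc, hv.1]
    have hxy : u * star a = star a * v := by
      calc u * star a = (u * star a) * (a * (star a * v)) := by rw [hy, mul_one]
        _ = ((u * star a) * a) * (star a * v) := by simp only [mul_assoc]
        _ = star a * v := by rw [hx, one_mul]
    exact ha <| isUnit_iff_exists.mpr ⟨star a * v, hy, hxy ▸ hx⟩
  rcases key with h | h
  · obtain ⟨i, hi⟩ := stmt8_aux π hsn (star a * a) ⟨a, rfl⟩ h
    refine ⟨i, fun hu => hi ?_⟩
    rw [map_mul, map_star]
    exact (hu.star.mul hu)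
  · obtain ⟨i, hi⟩ := stmt8_aux π hsn (a * star a) ⟨star a, by rw [star_star]⟩ h
    refine ⟨i, fun hu => hi ?_⟩
    rw [map_mul, map_star]
    exact (hu.mul hu.star)
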